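/- arXiv:2203.15530 — 6 statements merged into one kernel-verified Lean document; each statement's English description precedes it below -/
import Mathlib

section
/- Let γ > 0. For every t > 0 one has tanh(γ/2) − coth(γt) < 0, so the function ψ(t) = coth(γt) + (sinh(γt))^{−2}/(tanh(γ/2) − coth(γt)) is well defined on (0,∞). Moreover ψ is strictly increasing on (0,∞), ψ(1/2) = 0, and consequently ψ(t) ≥ ψ(1) > 0 for all t ≥ 1. -/
open MeasureTheory

/-- The function `ψ(t) = coth(γt) + (sinh(γt))^{−2}/(tanh(γ/2) − coth(γt))`. -/
noncomputable def psi (γ t : ℝ) : ℝ :=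
  Real.cosh (γ * t) / Real.sinh (γ * t) +
    ((Real.sinh (γ * t)) ^ 2)⁻¹ /
      (Real.tanh (γ / 2) - Real.cosh (γ * t) / Real.sinh (γ * t))

lemma coth_gt_one {x : ℝ} (hx : 0 < x) : 1 < Real.cosh x / Real.sinh x := by
  have hs : 0 < Real.sinh x := Real.sinh_pos_iff.mpr hx
  rw [lt_div_iff₀ hs, one_mul]
  exact Real.sinh_lt_cosh x

lemma coth_strict_anti {u v : ℝ} (hu : 0 < u) (huv : u < v) :
    Real.cosh v / Real.sinh v < Real.cosh u / Real.sinh u := by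
  have hsu : 0 < Real.sinh u := Real.sinh_pos_iff.mpr hu
  have hsv : 0 < Real.sinh v := Real.sinh_pos_iff.mpr (hu.trans huv)
  rw [div_lt_div_iff₀ hsv hsu]
  have h : 0 < Real.sinh (v - u) := Real.sinh_pos_iff.mpr (by linarith)
  rw [Real.sinh_sub] at h
  linarith

lemma psi_eq (γ t : ℝ) (h : 0 < γ * t) :
    psi γ t = (1 - Real.tanh (γ / 2) * (Real.cosh (γ * t) / Real.sinh (γ * t))) /
      (Real.cosh (γ * t) / Real.sinh (γ * t) - Real.tanh (γ / 2)) := by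
  have hs : 0 < Real.sinh (γ * t) := Real.sinh_pos_iff.mpr h
  have hc1 : 1 < Real.cosh (γ * t) / Real.sinh (γ * t) := coth_gt_one h
  have ha : Real.tanh (γ / 2) < 1 := by
    rw [Real.tanh_eq_sinh_div_cosh, div_lt_one (Real.cosh_pos _)]
    exact Real.sinh_lt_cosh _
  have hd : Real.cosh (γ * t) / Real.sinh (γ * t) - Real.tanh (γ / 2) ≠ 0 :=
    ne_of_gt (by linarith)
  have hid : Real.cosh (γ * t) ^ 2 - Real.sinh (γ * t) ^ 2 = 1 :=
    Real.cosh_sq_sub_sinh_sq _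
  have hda : Real.tanh (γ / 2) - Real.cosh (γ * t) / Real.sinh (γ * t) ≠ 0 :=
    ne_of_lt (by linarith)
  have hinv : ((Real.sinh (γ * t)) ^ 2)⁻¹ =
      (Real.cosh (γ * t) / Real.sinh (γ * t)) ^ 2 - 1 := by
    rw [inv_eq_iff_eq_inv, eq_comm, inv_eq_iff_eq_inv, div_pow]
    rw [div_sub_one (by positivity : Real.sinh (γ * t) ^ 2 ≠ 0), hid]
    exact one_div _
  unfold psi
  rw [hinv]
  set a := Real.tanh (γ / 2) with ha'
  set c := Real.cosh (γ * t) / Real.sinh (γ * t) with hc'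
  have hd' : c - a ≠ 0 := hd
  have hda' : a - c ≠ 0 := hda
  field_simp
  ring

lemma key {a c1 c2 : ℝ} (ha0 : 0 < a) (ha1 : a < 1) (h1 : 1 < c2) (h12 : c2 < c1) :
    (1 - a * c1) / (c1 - a) < (1 - a * c2) / (c2 - a) := by
  have d1 : 0 < c1 - a := by linarith
  have d2 : 0 < c2 - a := by linarith
  rw [div_lt_div_iff₀ d1 d2]
  nlinarith [mul_pos (sub_pos.mpr h12) (mul_pos (sub_pos.mpr ha1) (by linarith : (0:ℝ) < 1 + a))]

/-- For `γ > 0`: `tanh(γ/2) − coth(γt) < 0` for all `t > 0` (so `ψ` is well defined on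
`(0,∞)`), `ψ` is strictly increasing on `(0,∞)`, `ψ(1/2) = 0`, and consequently
`ψ(t) ≥ ψ(1) > 0` for all `t ≥ 1`. -/
theorem psi_monotone_positive (γ : ℝ) (hγ : 0 < γ) :
    (∀ t > (0 : ℝ), Real.tanh (γ / 2) - Real.cosh (γ * t) / Real.sinh (γ * t) < 0) ∧
    StrictMonoOn (psi γ) (Set.Ioi 0) ∧
    psi γ (1 / 2) = 0 ∧
    (∀ t ≥ (1 : ℝ), psi γ t ≥ psi γ 1) ∧
    0 < psi γ 1 := by
  have ha : Real.tanh (γ / 2) < 1 := by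
    rw [Real.tanh_eq_sinh_div_cosh, div_lt_one (Real.cosh_pos _)]
    exact Real.sinh_lt_cosh _
  have ha0 : 0 < Real.tanh (γ / 2) := by
    rw [Real.tanh_eq_sinh_div_cosh]
    exact div_pos (Real.sinh_pos_iff.mpr (by linarith)) (Real.cosh_pos _)
  have part1 : ∀ t > (0 : ℝ),
      Real.tanh (γ / 2) - Real.cosh (γ * t) / Real.sinh (γ * t) < 0 := by
    intro t ht
    have := coth_gt_one (mul_pos hγ ht)
    linarith
  have hmono : StrictMonoOn (psi γ) (Set.Ioi 0) := by
    intro t1 ht1 t2 ht2 h12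
    have ht1' : (0:ℝ) < t1 := ht1
    have ht2' : (0:ℝ) < t2 := ht2
    rw [psi_eq γ t1 (mul_pos hγ ht1'), psi_eq γ t2 (mul_pos hγ ht2')]
    exact key ha0 ha (coth_gt_one (mul_pos hγ ht2'))
      (coth_strict_anti (mul_pos hγ ht1') (by nlinarith))
  have hzero : psi γ (1 / 2) = 0 := by
    rw [psi_eq γ (1/2) (by positivity)]
    have hgt : γ * (1 / 2) = γ / 2 := by ring
    rw [hgt]
    have hc : Real.cosh (γ / 2) ≠ 0 := (Real.cosh_pos _).ne'
    have hs : Real.sinh (γ / 2) ≠ 0 := (Real.sinh_pos_iff.mpr (by linarith)).ne'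
    rw [Real.tanh_eq_sinh_div_cosh]
    rw [div_eq_zero_iff]
    left
    field_simp
    norm_num
  have hhalf : (1/2 : ℝ) ∈ Set.Ioi (0:ℝ) := by norm_num
  have hone : (1 : ℝ) ∈ Set.Ioi (0:ℝ) := by norm_num
  have hpos : 0 < psi γ 1 := by
    have := hmono hhalf hone (by norm_num)
    rw [hzero] at this
    exact this
  refine ⟨part1, hmono, hzero, ?_, hpos⟩
  intro t ht
  rcases eq_or_lt_of_le ht with h | h
  · rw [← h]
  · exact le_of_lt (hmono hone (by simp; linarith) h)
end

section
/- Let a > 0, A > 0 and B > 0 be real numbers. Then there exists a constant C > 0 (depending only on a, A, B) such that for all s ≥ 0: ∫_1^∞ exp(−At − Bs²/t) · t^{a−1} dt ≤ C · exp(−min(A, B)·s/2). -/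
open MeasureTheory

lemma aux_exponent_ineq (A B s t : ℝ) (hA : 0 < A) (hB : 0 < B) (hs : 0 ≤ s)
    (ht : 1 < t) : min A B * s / 2 + A / 2 * t ≤ A * t + B * s ^ 2 / t := by
  have ht0 : 0 < t := lt_trans one_pos ht
  have hm : min A B ≤ A := min_le_left _ _
  have hm' : min A B ≤ B := min_le_right _ _
  have hq : 0 ≤ B * s ^ 2 / t := by positivity
  rcases le_or_gt s t with h | h
  · nlinarith
  · have hst : s / t ≥ 1 := (le_div_iff₀ ht0).mpr (by linarith)
    have : B * s ≤ B * s ^ 2 / t := by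
      rw [mul_div_assoc]
      have : s ≤ s ^ 2 / t := by
        rw [le_div_iff₀ ht0]; nlinarith
      nlinarith
    nlinarith

/-- For `a, A, B > 0` there is `C > 0` (depending only on `a, A, B`) such that for
all `s ≥ 0`: `∫_1^∞ exp(−At − Bs²/t) t^{a−1} dt ≤ C exp(−min(A,B) s/2)`. -/
theorem integral_exp_decay_bound (a A B : ℝ) (ha : 0 < a) (hA : 0 < A) (hB : 0 < B) :
    ∃ C > (0 : ℝ), ∀ s ≥ (0 : ℝ),
      ∫ t in Set.Ioi (1 : ℝ), Real.exp (-A * t - B * s ^ 2 / t) * t ^ (a - 1) ≤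
        C * Real.exp (-min A B * s / 2) := by
  set g : ℝ → ℝ := fun t => Real.exp (-(A / 2) * t) * t ^ (a - 1) with hg_def
  have hgcont : ContinuousOn g (Set.Ici (1 : ℝ)) := by
    apply ContinuousOn.mul
    · exact (Real.continuous_exp.comp (continuous_const.mul continuous_id)).continuousOn
    · exact continuousOn_id.rpow_const (fun x hx => Or.inl (by
        have h1 : (1:ℝ) ≤ x := hx
        simp only [id_eq]
        exact ne_of_gt (by linarith)))
  have hg : IntegrableOn g (Set.Ioi (1 : ℝ)) := by
    apply integrable_of_isBigO_exp_neg (show (0:ℝ) < A / 4 by linarith) hgcont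
    have h0 : Filter.Tendsto (fun t : ℝ => t ^ (a - 1) * Real.exp (-(A/4) * t))
        Filter.atTop (nhds 0) :=
      tendsto_rpow_mul_exp_neg_mul_atTop_nhds_zero (a - 1) (A/4) (by linarith)
    have hO : (fun t : ℝ => t ^ (a - 1) * Real.exp (-(A/4) * t)) =O[Filter.atTop]
        (fun _ => (1:ℝ)) := h0.isBigO_one ℝ
    have h2 := hO.mul (Asymptotics.isBigO_refl (fun t : ℝ => Real.exp (-(A/4) * t)) Filter.atTop)
    have h3 : (fun t : ℝ => t ^ (a - 1) * Real.exp (-(A/4) * t) * Real.exp (-(A/4) * t))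
        =O[Filter.atTop] (fun t : ℝ => Real.exp (-(A/4) * t)) := by simpa using h2
    refine h3.congr' ?_ Filter.EventuallyEq.rfl
    filter_upwards with t
    simp only [hg_def]
    rw [show -(A/2) * t = (-(A/4) * t) + (-(A/4) * t) by ring, Real.exp_add]
    ring
  have hgmeas := measurableSet_Ioi (a := (1:ℝ))
  have hCpos : 0 < ∫ t in Set.Ioi (1:ℝ), g t := by
    rw [setIntegral_pos_iff_support_of_nonneg_ae]
    · have hsub : Set.Ioi (1:ℝ) ⊆ Function.support g ∩ Set.Ioi 1 := by
        intro t ht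
        refine ⟨?_, ht⟩
        have ht0 : 0 < t := lt_trans one_pos ht
        exact (mul_pos (Real.exp_pos _) (Real.rpow_pos_of_pos ht0 _)).ne'
      calc (0:ENNReal) < volume (Set.Ioi (1:ℝ)) := by simp [Real.volume_Ioi]
        _ ≤ volume (Function.support g ∩ Set.Ioi 1) := measure_mono hsub
    · refine Filter.eventually_of_mem (self_mem_ae_restrict hgmeas) fun t ht => ?_
      have ht0 : 0 < t := lt_trans one_pos ht
      exact (mul_pos (Real.exp_pos _) (Real.rpow_pos_of_pos ht0 _)).le
    · exact hg
  refine ⟨∫ t in Set.Ioi (1:ℝ), g t, hCpos, fun s hs => ?_⟩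
  set E : ℝ := Real.exp (-min A B * s / 2) with hE_def
  have hkey : ∀ t ∈ Set.Ioi (1:ℝ),
      Real.exp (-A * t - B * s ^ 2 / t) * t ^ (a - 1) ≤ E * g t := by
    intro t ht
    have ht1 : (1:ℝ) < t := ht
    have ht0 : 0 < t := lt_trans one_pos ht1
    have hexp : Real.exp (-A * t - B * s ^ 2 / t) ≤ E * Real.exp (-(A/2) * t) := by
      rw [hE_def, ← Real.exp_add, Real.exp_le_exp]
      have := aux_exponent_ineq A B s t hA hB hs ht1
      linarith
    calc Real.exp (-A * t - B * s ^ 2 / t) * t ^ (a - 1)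
        ≤ (E * Real.exp (-(A/2) * t)) * t ^ (a - 1) :=
          mul_le_mul_of_nonneg_right hexp (Real.rpow_nonneg ht0.le _)
      _ = E * g t := by rw [hg_def]; ring
  have hfmeas : AEStronglyMeasurable
      (fun t => Real.exp (-A * t - B * s ^ 2 / t) * t ^ (a - 1))
      (volume.restrict (Set.Ioi (1:ℝ))) := by
    apply ContinuousOn.aestronglyMeasurable _ hgmeas
    apply ContinuousOn.mul
    · exact (Real.continuous_exp.comp_continuousOn
        (((continuous_const.mul continuous_id).continuousOn).sub
          (continuousOn_const.div continuousOn_id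
            (fun t ht => ne_of_gt (lt_trans one_pos ht)))))
    · exact continuousOn_id.rpow_const (fun x hx => Or.inl (by
        simp only [id_eq]; exact ne_of_gt (lt_trans one_pos hx)))
  have hEg : IntegrableOn (fun t => E * g t) (Set.Ioi (1:ℝ)) := hg.const_mul E
  have hfint : IntegrableOn (fun t => Real.exp (-A * t - B * s ^ 2 / t) * t ^ (a - 1))
      (Set.Ioi (1:ℝ)) := by
    refine hEg.mono' hfmeas ?_
    refine Filter.eventually_of_mem (self_mem_ae_restrict hgmeas) fun t ht => ?_
    have ht0 : 0 < t := lt_trans one_pos ht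
    rw [Real.norm_eq_abs, abs_of_nonneg (by positivity)]
    exact hkey t ht
  calc ∫ t in Set.Ioi (1:ℝ), Real.exp (-A * t - B * s ^ 2 / t) * t ^ (a - 1)
      ≤ ∫ t in Set.Ioi (1:ℝ), E * g t := setIntegral_mono_on hfint hEg hgmeas hkey
    _ = (∫ t in Set.Ioi (1:ℝ), g t) * E := by rw [integral_const_mul]; ring
end

section
/- Let a > 0 and let d ≥ 1 be an integer. There exists a constant C > 0 depending only on a such that the following holds: for every real v ≥ 2 and every nondecreasing function ρ : ℝ → [0,∞), setting K = ⌊log₂ v⌋, one has v^a · ∫_0^1 ( e^{−tv} + ∑_{k=1}^K e^{−tv/2^k} · e^{−ρ(2^k)²/(2d)} + e^{−ρ(v)²/(2d)} ) t^{a−1} dt ≤ C · ( 1 + ∫_1^v s^{a−1} · e^{−ρ(s)²/(2d)} ds ). -/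
open MeasureTheory

lemma aux_gamma {a : ℝ} (ha : 0 < a) {l : ℝ} (hl : 0 < l) :
    ∫ t in Set.Ioc (0:ℝ) 1, Real.exp (-(l * t)) * t ^ (a - 1) ≤ Real.Gamma a / l ^ a := by
  have hll : l ^ (1 - a) * l ^ (a - 1) = 1 := by
    rw [← Real.rpow_add hl]; norm_num
  have h2 : ∀ t ∈ Set.uIcc (0:ℝ) 1,
      Real.exp (-(l * t)) * t ^ (a - 1)
        = l ^ (1 - a) * (Real.exp (-(l * t)) * (l * t) ^ (a - 1)) := by
    intro t ht
    rw [Set.uIcc_of_le zero_le_one] at ht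
    rw [Real.mul_rpow hl.le ht.1]
    linear_combination Real.exp (-(l * t)) * t ^ (a - 1) * hll.symm
  have h3 : (∫ t in (0:ℝ)..1, Real.exp (-(l * t)) * (l * t) ^ (a - 1))
      = l⁻¹ • ∫ u in (l*0)..(l*1), Real.exp (-u) * u ^ (a - 1) :=
    intervalIntegral.integral_comp_mul_left (fun u => Real.exp (-u) * u ^ (a - 1)) hl.ne'
  have hX : (∫ u in (0:ℝ)..l, Real.exp (-u) * u ^ (a - 1)) ≤ Real.Gamma a := by
    rw [intervalIntegral.integral_of_le hl.le, Real.Gamma_eq_integral ha]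
    refine setIntegral_mono_set (Real.GammaIntegral_convergent ha) ?_
      (HasSubset.Subset.eventuallyLE Set.Ioc_subset_Ioi_self)
    filter_upwards [self_mem_ae_restrict measurableSet_Ioi] with x hx
    have : (0:ℝ) < x := hx
    positivity
  have key : ∫ t in Set.Ioc (0:ℝ) 1, Real.exp (-(l * t)) * t ^ (a - 1)
      = l ^ (1 - a) * (l⁻¹ * ∫ u in (0:ℝ)..l, Real.exp (-u) * u ^ (a - 1)) := by
    rw [← intervalIntegral.integral_of_le zero_le_one,
      intervalIntegral.integral_congr h2, intervalIntegral.integral_const_mul, h3]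
    simp [smul_eq_mul]
  rw [key]
  have hc : l ^ (1 - a) * l⁻¹ = l ^ (-a) := by
    rw [← Real.rpow_neg_one l, ← Real.rpow_add hl, show 1 - a + -1 = -a by ring]
  have hpos : (0:ℝ) < l ^ (-a) := Real.rpow_pos_of_pos hl _
  have heq : Real.Gamma a / l ^ a = l ^ (-a) * Real.Gamma a := by
    rw [Real.rpow_neg hl.le, div_eq_mul_inv]; ring
  rw [heq, ← mul_assoc, hc]
  exact mul_le_mul_of_nonneg_left hX hpos.le


/-- The composite estimate of Lemma 3.3: for `a > 0` there is `C > 0` (depending only on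
`a`) such that for every `d ≥ 1`, every `v ≥ 2` and every nondecreasing
`ρ : ℝ → [0,∞)`, with `K = ⌊log₂ v⌋`,
`v^a ∫_0^1 (e^{−tv} + ∑_{k=1}^K e^{−tv/2^k} e^{−ρ(2^k)²/(2d)} + e^{−ρ(v)²/(2d)}) t^{a−1} dt
  ≤ C (1 + ∫_1^v s^{a−1} e^{−ρ(s)²/(2d)} ds)`. -/
theorem composite_dyadic_estimate (a : ℝ) (ha : 0 < a) :
    ∃ C > (0 : ℝ), ∀ d : ℕ, 1 ≤ d → ∀ v : ℝ, 2 ≤ v → ∀ ρ : ℝ → ℝ,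
      Monotone ρ → (∀ s, 0 ≤ ρ s) →
      v ^ a *
          ∫ t in Set.Ioc (0 : ℝ) 1,
            (Real.exp (-t * v) +
              (∑ k ∈ Finset.Icc 1 ⌊Real.logb 2 v⌋₊,
                Real.exp (-t * v / 2 ^ k) *
                  Real.exp (-(ρ ((2 : ℝ) ^ k)) ^ 2 / (2 * (d : ℝ)))) +
              Real.exp (-(ρ v) ^ 2 / (2 * (d : ℝ)))) * t ^ (a - 1) ≤
        C * (1 + ∫ s in Set.Ioc (1 : ℝ) v,
          s ^ (a - 1) * Real.exp (-(ρ s) ^ 2 / (2 * (d : ℝ)))) := by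
  have h2a : (0:ℝ) < (2:ℝ) ^ (-a) := Real.rpow_pos_of_pos two_pos _
  have h2a1 : (2:ℝ) ^ (-a) < 1 :=
    Real.rpow_lt_one_of_one_lt_of_neg one_lt_two (neg_neg_of_pos ha)
  set c : ℝ := (1 - (2:ℝ) ^ (-a)) / a with hcdef
  have hcpos : 0 < c := div_pos (by linarith) ha
  have hG : 0 < Real.Gamma a := Real.Gamma_pos_of_pos ha
  refine ⟨Real.Gamma a + Real.Gamma a / c + 1 / (a * c), by positivity, ?_⟩
  intro d hd v hv ρ hρ hρ0
  have hd0 : (0:ℝ) < 2 * (d:ℝ) := by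
    have : (1:ℝ) ≤ (d:ℝ) := by exact_mod_cast hd
    linarith
  have hv1 : (1:ℝ) ≤ v := by linarith
  have hv0 : (0:ℝ) < v := by linarith
  have hva : (0:ℝ) < v ^ a := Real.rpow_pos_of_pos hv0 a
  set K := ⌊Real.logb 2 v⌋₊ with hK
  -- facts about the exponential weight
  have hEpos : ∀ s : ℝ, 0 < Real.exp (-(ρ s) ^ 2 / (2 * (d:ℝ))) := fun s => Real.exp_pos _
  have hEle : ∀ s : ℝ, Real.exp (-(ρ s) ^ 2 / (2 * (d:ℝ))) ≤ 1 := by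
    intro s
    rw [← Real.exp_zero]
    apply Real.exp_le_exp.mpr
    rw [neg_div]
    have : 0 ≤ (ρ s) ^ 2 / (2 * (d:ℝ)) := by positivity
    linarith
  have hEanti : ∀ s t : ℝ, s ≤ t →
      Real.exp (-(ρ t) ^ 2 / (2 * (d:ℝ))) ≤ Real.exp (-(ρ s) ^ 2 / (2 * (d:ℝ))) := by
    intro s t hst
    apply Real.exp_le_exp.mpr
    have h1 : (ρ s) ^ 2 ≤ (ρ t) ^ 2 := pow_le_pow_left₀ (hρ0 s) (hρ hst) 2
    exact (div_le_div_iff_of_pos_right hd0).mpr (neg_le_neg h1)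
  have hmeasE : Measurable (fun s : ℝ => Real.exp (-(ρ s) ^ 2 / (2 * (d:ℝ)))) :=
    Real.measurable_exp.comp (((hρ.measurable.pow_const 2).neg).div_const _)
  have hmrpow : Measurable (fun s : ℝ => s ^ (a - 1)) := by fun_prop
  -- integrability of g on (1, v]
  have hIOn : IntegrableOn (fun s : ℝ => s ^ (a - 1) * Real.exp (-(ρ s) ^ 2 / (2 * (d:ℝ))))
      (Set.Ioc 1 v) := by
    apply Integrable.mono' (integrable_const (max 1 (v ^ (a - 1))))
      ((hmrpow.mul hmeasE).aestronglyMeasurable)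
    filter_upwards [self_mem_ae_restrict measurableSet_Ioc] with s hs
    have hs0 : (0:ℝ) < s := lt_of_lt_of_le one_pos hs.1.le
    have h1 : s ^ (a - 1) * Real.exp (-(ρ s) ^ 2 / (2 * (d:ℝ))) ≤ s ^ (a - 1) :=
      mul_le_of_le_one_right (Real.rpow_nonneg hs0.le _) (hEle s)
    have h2 : s ^ (a - 1) ≤ max 1 (v ^ (a - 1)) := by
      rcases le_or_gt 1 a with hha | hha
      · exact le_max_of_le_right (Real.rpow_le_rpow hs0.le hs.2 (by linarith))
      · exact le_max_of_le_left (Real.rpow_le_one_of_one_le_of_nonpos hs.1.le (by linarith))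
    show ‖s ^ (a - 1) * Real.exp (-(ρ s) ^ 2 / (2 * (d:ℝ)))‖ ≤ max 1 (v ^ (a - 1))
    rw [Real.norm_eq_abs, abs_of_nonneg (by positivity)]
    linarith
  set I := ∫ s in Set.Ioc (1:ℝ) v, s ^ (a - 1) * Real.exp (-(ρ s) ^ 2 / (2 * (d:ℝ))) with hIdef
  have hInonneg : 0 ≤ I := by
    apply setIntegral_nonneg measurableSet_Ioc
    intro s hs
    have : (0:ℝ) < s := lt_of_lt_of_le one_pos hs.1.le
    positivity
  have h2K : (2:ℝ) ^ K ≤ v := by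
    have h1 : ((K:ℝ)) ≤ Real.logb 2 v := Nat.floor_le (Real.logb_nonneg one_lt_two hv1)
    calc (2:ℝ) ^ K = (2:ℝ) ^ (K:ℝ) := (Real.rpow_natCast 2 K).symm
      _ ≤ (2:ℝ) ^ Real.logb 2 v := Real.rpow_le_rpow_of_exponent_le one_le_two h1
      _ = v := Real.rpow_logb two_pos (by norm_num) hv0
  -- block lower bound
  have hblock : ∀ u w : ℝ, 1 ≤ u → u ≤ w → w ≤ v →
      Real.exp (-(ρ w) ^ 2 / (2 * (d:ℝ))) * ((w ^ a - u ^ a) / a)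
        ≤ ∫ s in Set.Ioc u w, s ^ (a - 1) * Real.exp (-(ρ s) ^ 2 / (2 * (d:ℝ))) := by
    intro u w hu huw hwv
    have hu0 : (0:ℝ) < u := lt_of_lt_of_le one_pos hu
    have hint1 : IntegrableOn
        (fun s : ℝ => s ^ (a - 1) * Real.exp (-(ρ w) ^ 2 / (2 * (d:ℝ)))) (Set.Ioc u w) :=
      (intervalIntegrable_iff_integrableOn_Ioc_of_le huw).mp
        ((intervalIntegral.intervalIntegrable_rpow' (by linarith)).mul_const _)
    have hint2 : IntegrableOn
        (fun s : ℝ => s ^ (a - 1) * Real.exp (-(ρ s) ^ 2 / (2 * (d:ℝ)))) (Set.Ioc u w) :=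
      hIOn.mono_set (Set.Ioc_subset_Ioc hu hwv)
    have heval : ∫ s in Set.Ioc u w, s ^ (a - 1) * Real.exp (-(ρ w) ^ 2 / (2 * (d:ℝ)))
        = ((w ^ a - u ^ a) / a) * Real.exp (-(ρ w) ^ 2 / (2 * (d:ℝ))) := by
      rw [MeasureTheory.integral_mul_const, ← intervalIntegral.integral_of_le huw,
        integral_rpow (Or.inl (by linarith : (-1:ℝ) < a - 1)),
        show a - 1 + 1 = a by ring]
    calc Real.exp (-(ρ w) ^ 2 / (2 * (d:ℝ))) * ((w ^ a - u ^ a) / a)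
        = ∫ s in Set.Ioc u w, s ^ (a - 1) * Real.exp (-(ρ w) ^ 2 / (2 * (d:ℝ))) := by
          rw [heval]; ring
      _ ≤ ∫ s in Set.Ioc u w, s ^ (a - 1) * Real.exp (-(ρ s) ^ 2 / (2 * (d:ℝ))) := by
          apply setIntegral_mono_on hint1 hint2 measurableSet_Ioc
          intro s hs
          exact mul_le_mul_of_nonneg_left (hEanti s w hs.2)
            (Real.rpow_nonneg (le_of_lt (lt_trans hu0 hs.1)) _)
  have hIocsub : ∀ u w : ℝ, 1 ≤ u → w ≤ v →
      (∫ s in Set.Ioc u w, s ^ (a - 1) * Real.exp (-(ρ s) ^ 2 / (2 * (d:ℝ)))) ≤ I := by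
    intro u w hu hwv
    apply setIntegral_mono_set hIOn
    · filter_upwards [self_mem_ae_restrict measurableSet_Ioc] with s hs
      have : (0:ℝ) < s := lt_of_lt_of_le one_pos hs.1.le
      positivity
    · exact HasSubset.Subset.eventuallyLE (Set.Ioc_subset_Ioc hu hwv)
  -- dyadic difference identity
  have hdiff : ∀ w : ℝ, 0 ≤ w → w ^ a - (w / 2) ^ a = w ^ a * (1 - (2:ℝ) ^ (-a)) := by
    intro w hw
    rw [Real.div_rpow hw (by norm_num : (0:ℝ) ≤ 2), Real.rpow_neg (by norm_num : (0:ℝ) ≤ 2)]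
    have h2apos : (0:ℝ) < (2:ℝ) ^ a := Real.rpow_pos_of_pos two_pos a
    field_simp
  -- the dyadic sum bound
  have hsum : (∑ k ∈ Finset.Icc 1 K,
      Real.exp (-(ρ ((2:ℝ) ^ k)) ^ 2 / (2 * (d:ℝ))) * ((2:ℝ) ^ k) ^ a) ≤ I / c := by
    rw [le_div_iff₀ hcpos]
    have hpow1 : ∀ i : ℕ, (1:ℝ) ≤ 2 ^ i := by
      intro i
      calc (1:ℝ) = 2 ^ (0:ℕ) := by norm_num
        _ ≤ 2 ^ i := pow_le_pow_right₀ one_le_two (Nat.zero_le i)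
    calc (∑ k ∈ Finset.Icc 1 K,
          Real.exp (-(ρ ((2:ℝ) ^ k)) ^ 2 / (2 * (d:ℝ))) * ((2:ℝ) ^ k) ^ a) * c
        = ∑ k ∈ Finset.Icc 1 K, Real.exp (-(ρ ((2:ℝ) ^ k)) ^ 2 / (2 * (d:ℝ)))
            * ((((2:ℝ) ^ k) ^ a - ((2:ℝ) ^ (k - 1)) ^ a) / a) := by
          rw [Finset.sum_mul]
          apply Finset.sum_congr rfl
          intro k hk
          have hk1 : 1 ≤ k := (Finset.mem_Icc.mp hk).1
          have hhalf : ((2:ℝ) ^ (k - 1)) = (2:ℝ) ^ k / 2 := by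
            rw [eq_div_iff (two_ne_zero), ← pow_succ, Nat.sub_add_cancel hk1]
          rw [hhalf, hdiff ((2:ℝ) ^ k) (by positivity), hcdef]
          ring
      _ ≤ ∑ k ∈ Finset.Icc 1 K, ∫ s in Set.Ioc ((2:ℝ) ^ (k - 1)) ((2:ℝ) ^ k),
            s ^ (a - 1) * Real.exp (-(ρ s) ^ 2 / (2 * (d:ℝ))) := by
          apply Finset.sum_le_sum
          intro k hk
          obtain ⟨hk1, hkK⟩ := Finset.mem_Icc.mp hk
          exact hblock ((2:ℝ) ^ (k - 1)) ((2:ℝ) ^ k) (hpow1 _)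
            (pow_le_pow_right₀ one_le_two (Nat.sub_le k 1))
            (le_trans (pow_le_pow_right₀ one_le_two hkK) h2K)
      _ = ∑ i ∈ Finset.range K, ∫ s in ((2:ℝ) ^ i)..((2:ℝ) ^ (i + 1)),
            s ^ (a - 1) * Real.exp (-(ρ s) ^ 2 / (2 * (d:ℝ))) := by
          rw [← Finset.Ico_add_one_right_eq_Icc, Finset.sum_Ico_eq_sum_range]
          simp only [Nat.add_sub_cancel, Nat.add_sub_cancel_left]
          apply Finset.sum_congr rfl
          intro i _
          rw [intervalIntegral.integral_of_le (pow_le_pow_right₀ one_le_two (by omega))]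
          rw [show 1 + i = i + 1 by ring]
      _ = ∫ s in (((2:ℝ)) ^ (0:ℕ))..((2:ℝ) ^ K),
            s ^ (a - 1) * Real.exp (-(ρ s) ^ 2 / (2 * (d:ℝ))) := by
          apply intervalIntegral.sum_integral_adjacent_intervals
          intro i hi
          rw [intervalIntegrable_iff_integrableOn_Ioc_of_le
            (pow_le_pow_right₀ one_le_two (Nat.le_succ i))]
          exact hIOn.mono_set (Set.Ioc_subset_Ioc (hpow1 i)
            (le_trans (pow_le_pow_right₀ one_le_two hi) h2K))
      _ ≤ I := by
          rw [show ((2:ℝ)) ^ (0:ℕ) = 1 by norm_num,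
            intervalIntegral.integral_of_le (le_trans (hpow1 K) (le_refl _))]
          exact hIocsub 1 ((2:ℝ) ^ K) le_rfl h2K
  -- single top block bound
  have htop : v ^ a * Real.exp (-(ρ v) ^ 2 / (2 * (d:ℝ))) ≤ I / c := by
    rw [le_div_iff₀ hcpos]
    have h1 : Real.exp (-(ρ v) ^ 2 / (2 * (d:ℝ))) * ((v ^ a - (v / 2) ^ a) / a)
        ≤ ∫ s in Set.Ioc (v/2) v, s ^ (a - 1) * Real.exp (-(ρ s) ^ 2 / (2 * (d:ℝ))) :=
      hblock (v/2) v (by linarith) (by linarith) le_rfl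
    have h2 := hIocsub (v/2) v (by linarith) le_rfl
    have h3 : Real.exp (-(ρ v) ^ 2 / (2 * (d:ℝ))) * ((v ^ a - (v / 2) ^ a) / a)
        = v ^ a * Real.exp (-(ρ v) ^ 2 / (2 * (d:ℝ))) * c := by
      rw [hdiff v hv0.le, hcdef]; ring
    rw [← h3]
    linarith [h1, h2]
  -- base integral of t^(a-1)
  have hbase : (∫ t in Set.Ioc (0:ℝ) 1, t ^ (a - 1)) = 1 / a := by
    rw [← intervalIntegral.integral_of_le zero_le_one,
      integral_rpow (Or.inl (by linarith : (-1:ℝ) < a - 1)),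
      show a - 1 + 1 = a by ring]
    rw [Real.one_rpow, Real.zero_rpow ha.ne']
    norm_num
  -- integrability on (0,1]
  have hrpowInt : IntegrableOn (fun t : ℝ => t ^ (a - 1)) (Set.Ioc 0 1) :=
    (intervalIntegrable_iff_integrableOn_Ioc_of_le zero_le_one).mp
      (intervalIntegral.intervalIntegrable_rpow' (by linarith))
  have hexpInt : ∀ l : ℝ, 0 ≤ l → IntegrableOn
      (fun t : ℝ => Real.exp (-(l * t)) * t ^ (a - 1)) (Set.Ioc 0 1) := by
    intro l hl
    apply Integrable.mono' hrpowInt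
    · exact ((Real.measurable_exp.comp ((measurable_id.const_mul l).neg)).mul
        hmrpow).aestronglyMeasurable
    · filter_upwards [self_mem_ae_restrict measurableSet_Ioc] with t ht
      rw [Real.norm_eq_abs, abs_of_nonneg
        (mul_nonneg (Real.exp_nonneg _) (Real.rpow_nonneg ht.1.le _))]
      apply mul_le_of_le_one_left (Real.rpow_nonneg ht.1.le _)
      rw [← Real.exp_zero]
      apply Real.exp_le_exp.mpr
      have : 0 ≤ l * t := mul_nonneg hl ht.1.le
      linarith
  -- split the integral
  have hsplit : (∫ t in Set.Ioc (0 : ℝ) 1,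
        (Real.exp (-t * v) +
          (∑ k ∈ Finset.Icc 1 K, Real.exp (-t * v / 2 ^ k) *
            Real.exp (-(ρ ((2 : ℝ) ^ k)) ^ 2 / (2 * (d:ℝ)))) +
          Real.exp (-(ρ v) ^ 2 / (2 * (d:ℝ)))) * t ^ (a - 1))
      = (∫ t in Set.Ioc (0:ℝ) 1, Real.exp (-(v * t)) * t ^ (a - 1))
        + (∑ k ∈ Finset.Icc 1 K, Real.exp (-(ρ ((2 : ℝ) ^ k)) ^ 2 / (2 * (d:ℝ)))
            * ∫ t in Set.Ioc (0:ℝ) 1, Real.exp (-((v / 2 ^ k) * t)) * t ^ (a - 1))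
        + Real.exp (-(ρ v) ^ 2 / (2 * (d:ℝ))) * (1 / a) := by
    have hptwise : ∀ t : ℝ,
        (Real.exp (-t * v) +
          (∑ k ∈ Finset.Icc 1 K, Real.exp (-t * v / 2 ^ k) *
            Real.exp (-(ρ ((2 : ℝ) ^ k)) ^ 2 / (2 * (d:ℝ)))) +
          Real.exp (-(ρ v) ^ 2 / (2 * (d:ℝ)))) * t ^ (a - 1)
        = Real.exp (-(v * t)) * t ^ (a - 1)
          + (∑ k ∈ Finset.Icc 1 K, Real.exp (-(ρ ((2 : ℝ) ^ k)) ^ 2 / (2 * (d:ℝ)))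
              * (Real.exp (-((v / 2 ^ k) * t)) * t ^ (a - 1)))
          + Real.exp (-(ρ v) ^ 2 / (2 * (d:ℝ))) * t ^ (a - 1) := by
      intro t
      rw [add_mul, add_mul, Finset.sum_mul]
      congr 2
      · rw [show -t * v = -(v * t) by ring]
      · apply Finset.sum_congr rfl
        intro k _
        rw [show -t * v / 2 ^ k = -((v / 2 ^ k) * t) by ring]
        ring
    rw [MeasureTheory.integral_congr_ae (Filter.Eventually.of_forall hptwise)]
    have hint1 : IntegrableOn (fun t : ℝ => Real.exp (-(v * t)) * t ^ (a - 1))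
        (Set.Ioc 0 1) := hexpInt v hv0.le
    have hint2 : IntegrableOn (fun t : ℝ => ∑ k ∈ Finset.Icc 1 K,
        Real.exp (-(ρ ((2 : ℝ) ^ k)) ^ 2 / (2 * (d:ℝ)))
          * (Real.exp (-((v / 2 ^ k) * t)) * t ^ (a - 1))) (Set.Ioc 0 1) := by
      apply integrable_finset_sum
      intro k _
      exact (hexpInt (v / 2 ^ k) (by positivity)).const_mul _
    have hint3 : IntegrableOn (fun t : ℝ =>
        Real.exp (-(ρ v) ^ 2 / (2 * (d:ℝ))) * t ^ (a - 1)) (Set.Ioc 0 1) :=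
      hrpowInt.const_mul _
    have hint12 : IntegrableOn (fun t : ℝ => Real.exp (-(v * t)) * t ^ (a - 1)
        + ∑ k ∈ Finset.Icc 1 K, Real.exp (-(ρ ((2 : ℝ) ^ k)) ^ 2 / (2 * (d:ℝ)))
          * (Real.exp (-((v / 2 ^ k) * t)) * t ^ (a - 1))) (Set.Ioc 0 1) := hint1.add hint2
    rw [MeasureTheory.integral_add hint12 hint3,
      MeasureTheory.integral_add hint1 hint2,
      MeasureTheory.integral_finset_sum _ (fun k _ =>
        (hexpInt (v / 2 ^ k) (by positivity)).const_mul _)]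
    congr 1
    · congr 1
      apply Finset.sum_congr rfl
      intro k _
      exact MeasureTheory.integral_const_mul _ _
    · rw [MeasureTheory.integral_const_mul, hbase]
  -- bound the three pieces
  rw [hsplit, mul_add, mul_add]
  have hb1 : v ^ a * ∫ t in Set.Ioc (0:ℝ) 1, Real.exp (-(v * t)) * t ^ (a - 1)
      ≤ Real.Gamma a := by
    have := aux_gamma ha hv0
    calc v ^ a * ∫ t in Set.Ioc (0:ℝ) 1, Real.exp (-(v * t)) * t ^ (a - 1)
        ≤ v ^ a * (Real.Gamma a / v ^ a) := mul_le_mul_of_nonneg_left this hva.le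
      _ = Real.Gamma a := by field_simp
  have hb2 : v ^ a * (∑ k ∈ Finset.Icc 1 K,
      Real.exp (-(ρ ((2 : ℝ) ^ k)) ^ 2 / (2 * (d:ℝ)))
        * ∫ t in Set.Ioc (0:ℝ) 1, Real.exp (-((v / 2 ^ k) * t)) * t ^ (a - 1))
      ≤ Real.Gamma a * (I / c) := by
    have hstep : (∑ k ∈ Finset.Icc 1 K,
        Real.exp (-(ρ ((2 : ℝ) ^ k)) ^ 2 / (2 * (d:ℝ)))
          * ∫ t in Set.Ioc (0:ℝ) 1, Real.exp (-((v / 2 ^ k) * t)) * t ^ (a - 1))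
        ≤ ∑ k ∈ Finset.Icc 1 K,
            Real.exp (-(ρ ((2 : ℝ) ^ k)) ^ 2 / (2 * (d:ℝ)))
              * (Real.Gamma a * ((2:ℝ) ^ k) ^ a / v ^ a) := by
      apply Finset.sum_le_sum
      intro k _
      have hlk : (0:ℝ) < v / 2 ^ k := by positivity
      have h2k : (0:ℝ) < ((2:ℝ) ^ k) ^ a := by positivity
      have := aux_gamma ha hlk
      have heq : Real.Gamma a / (v / 2 ^ k) ^ a
          = Real.Gamma a * ((2:ℝ) ^ k) ^ a / v ^ a := by
        rw [Real.div_rpow hv0.le (by positivity : (0:ℝ) ≤ (2:ℝ) ^ k)]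
        field_simp
      exact mul_le_mul_of_nonneg_left (heq ▸ this) (hEpos _).le
    calc v ^ a * (∑ k ∈ Finset.Icc 1 K,
        Real.exp (-(ρ ((2 : ℝ) ^ k)) ^ 2 / (2 * (d:ℝ)))
          * ∫ t in Set.Ioc (0:ℝ) 1, Real.exp (-((v / 2 ^ k) * t)) * t ^ (a - 1))
        ≤ v ^ a * ∑ k ∈ Finset.Icc 1 K,
            Real.exp (-(ρ ((2 : ℝ) ^ k)) ^ 2 / (2 * (d:ℝ)))
              * (Real.Gamma a * ((2:ℝ) ^ k) ^ a / v ^ a) :=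
          mul_le_mul_of_nonneg_left hstep hva.le
      _ = Real.Gamma a * ∑ k ∈ Finset.Icc 1 K,
            Real.exp (-(ρ ((2 : ℝ) ^ k)) ^ 2 / (2 * (d:ℝ))) * ((2:ℝ) ^ k) ^ a := by
          rw [Finset.mul_sum, Finset.mul_sum]
          apply Finset.sum_congr rfl
          intro k _
          field_simp
      _ ≤ Real.Gamma a * (I / c) := mul_le_mul_of_nonneg_left hsum hG.le
  have hb3 : v ^ a * (Real.exp (-(ρ v) ^ 2 / (2 * (d:ℝ))) * (1 / a))
      ≤ (1 / a) * (I / c) := by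
    have h1 : v ^ a * (Real.exp (-(ρ v) ^ 2 / (2 * (d:ℝ))) * (1 / a))
        = (v ^ a * Real.exp (-(ρ v) ^ 2 / (2 * (d:ℝ)))) * (1 / a) := by ring
    rw [h1]
    have := mul_le_mul_of_nonneg_right htop (by positivity : (0:ℝ) ≤ 1 / a)
    linarith
  have hCI : 0 ≤ Real.Gamma a * I := mul_nonneg hG.le hInonneg
  have hfin : Real.Gamma a + Real.Gamma a * (I / c) + 1 / a * (I / c)
      ≤ (Real.Gamma a + Real.Gamma a / c + 1 / (a * c)) * (1 + I) := by
    have hx : 0 < Real.Gamma a / c := by positivity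
    have hy : 0 < 1 / (a * c) := by positivity
    have hexp : (Real.Gamma a + Real.Gamma a / c + 1 / (a * c)) * (1 + I)
        = Real.Gamma a + Real.Gamma a / c + 1 / (a * c)
          + Real.Gamma a * I + Real.Gamma a * (I / c) + 1 / a * (I / c) := by
      field_simp
      ring
    rw [hexp]
    linarith [hCI]
  linarith [hb1, hb2, hb3, hfin]
end

section
/- Let d ≥ 1 be an integer, let β > 1, N > 0 and 0 < m ≤ M be real numbers, and let V : ℝ^d → ℝ satisfy m·β^{‖y‖} ≤ V(y) ≤ M·β^{‖y‖} for all y with ‖y‖ ≥ N. Then for every x with ‖x‖ ≥ 2N, every real s ≥ (2M/m)², and every y with ‖x−y‖ ≤ (1/2)·min(‖x‖, log s / log β), one has V(y) ≥ 2V(x)/s. -/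
open MeasureTheory

/-- For a potential of global exponential growth `m β^{‖y‖} ≤ V(y) ≤ M β^{‖y‖}`
(for `‖y‖ ≥ N`): for every `x` with `‖x‖ ≥ 2N`, every `s ≥ (2M/m)²` and every `y` with
`‖x−y‖ ≤ (1/2) min(‖x‖, log_β s)`, one has `V(y) ≥ 2V(x)/s`. -/
theorem rho_lower_bound_exponential_potential (d : ℕ) (hd : 1 ≤ d) (β N m M : ℝ)
    (hβ : 1 < β) (hN : 0 < N) (hm : 0 < m) (hmM : m ≤ M)
    (V : EuclideanSpace ℝ (Fin d) → ℝ)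
    (hV : ∀ y : EuclideanSpace ℝ (Fin d), N ≤ ‖y‖ →
      m * β ^ ‖y‖ ≤ V y ∧ V y ≤ M * β ^ ‖y‖) :
    ∀ x : EuclideanSpace ℝ (Fin d), 2 * N ≤ ‖x‖ →
      ∀ s : ℝ, (2 * M / m) ^ 2 ≤ s →
        ∀ y : EuclideanSpace ℝ (Fin d),
          ‖x - y‖ ≤ (1 / 2) * min ‖x‖ (Real.log s / Real.log β) →
          2 * V x / s ≤ V y := by
  intro x hx s hs y hy
  have hβ0 : (0:ℝ) < β := lt_trans one_pos hβ
  have hM : 0 < M := lt_of_lt_of_le hm hmM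
  have h2 : (2:ℝ) ≤ 2 * M / m := by rw [le_div_iff₀ hm]; linarith
  have hs0 : (0:ℝ) < s := lt_of_lt_of_le (by positivity) hs
  have hsq : Real.sqrt s * Real.sqrt s = s := Real.mul_self_sqrt hs0.le
  have hsq0 : 0 < Real.sqrt s := Real.sqrt_pos.2 hs0
  have hsqrt : 2 * M / m ≤ Real.sqrt s := by
    nlinarith [hsq, hs, hsq0, sq_nonneg (Real.sqrt s - 2 * M / m)]
  set L := Real.log s / Real.log β with hLdef
  have hyx1 : ‖x - y‖ ≤ ‖x‖ / 2 := by
    have := min_le_left ‖x‖ L; linarith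
  have hyx2 : ‖x - y‖ ≤ L / 2 := by
    have := min_le_right ‖x‖ L; linarith
  have hy1 : ‖x‖ / 2 ≤ ‖y‖ := by linarith [norm_sub_norm_le x y]
  have hy2 : ‖x‖ - L / 2 ≤ ‖y‖ := by linarith [norm_sub_norm_le x y]
  have hNy : N ≤ ‖y‖ := by linarith
  have hNx : N ≤ ‖x‖ := by linarith
  obtain ⟨hVy, -⟩ := hV y hNy
  obtain ⟨-, hVx⟩ := hV x hNx
  have hβL : β ^ L = s := by
    have : L = Real.logb β s := rfl
    rw [this, Real.rpow_logb hβ0 (ne_of_gt hβ) hs0]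
  have hβhalf : β ^ (L / 2) = Real.sqrt s := by
    rw [show L / 2 = L * (1/2 : ℝ) by ring, Real.rpow_mul hβ0.le, hβL,
      Real.sqrt_eq_rpow]
  have hB : (0:ℝ) < β ^ ‖x‖ := Real.rpow_pos_of_pos hβ0 _
  have step1 : β ^ (‖x‖ - L / 2) ≤ β ^ ‖y‖ :=
    Real.rpow_le_rpow_of_exponent_le hβ.le hy2
  have step2 : β ^ (‖x‖ - L / 2) = β ^ ‖x‖ / Real.sqrt s := by
    rw [Real.rpow_sub hβ0, hβhalf]
  have h2Ms : 2 * M ≤ m * Real.sqrt s := by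
    rw [div_le_iff₀ hm] at hsqrt; linarith
  calc 2 * V x / s ≤ 2 * (M * β ^ ‖x‖) / s := by gcongr
    _ ≤ m * (β ^ ‖x‖ / Real.sqrt s) := by
        rw [mul_div_assoc', div_le_div_iff₀ hs0 hsq0]
        have h0 : 0 ≤ β ^ ‖x‖ * Real.sqrt s := by positivity
        calc 2 * (M * β ^ ‖x‖) * Real.sqrt s
            = 2 * M * (β ^ ‖x‖ * Real.sqrt s) := by ring
          _ ≤ m * Real.sqrt s * (β ^ ‖x‖ * Real.sqrt s) :=
              mul_le_mul_of_nonneg_right h2Ms h0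
          _ = m * β ^ ‖x‖ * (Real.sqrt s * Real.sqrt s) := by ring
          _ = m * β ^ ‖x‖ * s := by rw [hsq]
    _ = m * β ^ (‖x‖ - L / 2) := by rw [step2]
    _ ≤ m * β ^ ‖y‖ := by nlinarith
    _ ≤ V y := hVy
end

section
/- Let d ≥ 1 be an integer, let β > 1, N > 0 and 0 < m ≤ M be real numbers, and let V : ℝ^d → ℝ satisfy V(y) ≤ M·β^{‖y‖} for all y ∈ ℝ^d and V(x) ≥ m·β^{‖x‖} for all x with ‖x‖ ≥ N. Then for every x with ‖x‖ ≥ N, every real s ≥ (2M/m)², and every y with ‖x−y‖ ≤ (1/2)·(log s / log β), one has V(y) ≤ s·V(x)/2. -/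
open MeasureTheory

/-- For a potential with `V(y) ≤ M β^{‖y‖}` everywhere and `V(x) ≥ m β^{‖x‖}` for
`‖x‖ ≥ N`: for every `x` with `‖x‖ ≥ N`, every `s ≥ (2M/m)²` and every `y` with
`‖x−y‖ ≤ (1/2) log_β s`, one has `V(y) ≤ s V(x)/2`. -/
theorem sigma_lower_bound_exponential_potential (d : ℕ) (hd : 1 ≤ d) (β N m M : ℝ)
    (hβ : 1 < β) (hN : 0 < N) (hm : 0 < m) (hmM : m ≤ M)
    (V : EuclideanSpace ℝ (Fin d) → ℝ)
    (hV_upper : ∀ y : EuclideanSpace ℝ (Fin d), V y ≤ M * β ^ ‖y‖)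
    (hV_lower : ∀ x : EuclideanSpace ℝ (Fin d), N ≤ ‖x‖ → m * β ^ ‖x‖ ≤ V x) :
    ∀ x : EuclideanSpace ℝ (Fin d), N ≤ ‖x‖ →
      ∀ s : ℝ, (2 * M / m) ^ 2 ≤ s →
        ∀ y : EuclideanSpace ℝ (Fin d),
          ‖x - y‖ ≤ (1 / 2) * (Real.log s / Real.log β) →
          V y ≤ s * V x / 2 := by
  intro x hx s hs y hy
  have hM : 0 < M := lt_of_lt_of_le hm hmM
  have hβ0 : (0:ℝ) < β := lt_trans one_pos hβ
  have hq : 0 < 2 * M / m := by positivity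
  have hs0 : 0 < s := lt_of_lt_of_le (by positivity) hs
  -- sqrt s ≥ 2M/m
  have hsqrt : 2 * M / m ≤ Real.sqrt s := by
    have := Real.sqrt_le_sqrt hs
    rwa [Real.sqrt_sq hq.le] at this
  have hsq : Real.sqrt s * Real.sqrt s = s := Real.mul_self_sqrt hs0.le
  -- β^‖x-y‖ ≤ sqrt s
  have hexp : β ^ ‖x - y‖ ≤ Real.sqrt s := by
    have h1 : β ^ ‖x - y‖ ≤ β ^ ((1/2) * (Real.log s / Real.log β)) :=
      Real.rpow_le_rpow_of_exponent_le hβ.le hy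
    have h2 : β ^ ((1/2) * (Real.log s / Real.log β)) = Real.sqrt s := by
      have : (1/2) * (Real.log s / Real.log β) = Real.logb β s * (1/2 : ℝ) := by
        rw [Real.logb]; ring
      rw [this, Real.rpow_mul hβ0.le, Real.rpow_logb hβ0 (ne_of_gt hβ) hs0,
        Real.sqrt_eq_rpow]
    rw [← h2]; exact h1
  have hny : ‖y‖ ≤ ‖x‖ + ‖x - y‖ := by
    calc ‖y‖ = ‖x - (x - y)‖ := by congr 1; abel
    _ ≤ ‖x‖ + ‖x - y‖ := norm_sub_le _ _
  have hb1 : β ^ ‖y‖ ≤ β ^ ‖x‖ * β ^ ‖x - y‖ := by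
    rw [← Real.rpow_add hβ0]
    exact Real.rpow_le_rpow_of_exponent_le hβ.le hny
  have hbx : (0:ℝ) < β ^ ‖x‖ := Real.rpow_pos_of_pos hβ0 _
  have hbxy : (0:ℝ) < β ^ ‖x - y‖ := Real.rpow_pos_of_pos hβ0 _
  have key : V y ≤ M * (β ^ ‖x‖ * Real.sqrt s) :=
    calc V y ≤ M * β ^ ‖y‖ := hV_upper y
    _ ≤ M * (β ^ ‖x‖ * β ^ ‖x - y‖) := mul_le_mul_of_nonneg_left hb1 hM.le
    _ ≤ M * (β ^ ‖x‖ * Real.sqrt s) :=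
        mul_le_mul_of_nonneg_left (mul_le_mul_of_nonneg_left hexp hbx.le) hM.le
  have hVx : m * β ^ ‖x‖ ≤ V x := hV_lower x hx
  have h2M : 2 * M ≤ Real.sqrt s * m := (div_le_iff₀ hm).mp hsqrt
  have : M * (β ^ ‖x‖ * Real.sqrt s) ≤ s * (m * β ^ ‖x‖) / 2 := by
    have h3 : 2 * M * (Real.sqrt s * β ^ ‖x‖) ≤
        (Real.sqrt s * m) * (Real.sqrt s * β ^ ‖x‖) :=
      mul_le_mul_of_nonneg_right h2M (mul_nonneg (Real.sqrt_nonneg s) hbx.le)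
    have h4 : (Real.sqrt s * m) * (Real.sqrt s * β ^ ‖x‖) = s * (m * β ^ ‖x‖) := by
      rw [mul_mul_mul_comm, hsq]
    linarith
  calc V y ≤ s * (m * β ^ ‖x‖) / 2 := le_trans key this
  _ ≤ s * V x / 2 := by nlinarith
end

section
/- Let d ≥ 1 be an integer, let α > 0, N > 0, C ≥ 0 and 0 < m ≤ M be real numbers, and let V : ℝ^d → ℝ satisfy V(y) ≤ M‖y‖^α for all y with ‖y‖ ≥ N, V(y) ≤ C for all y with ‖y‖ < N, and V(x) ≥ m‖x‖^α for all x with ‖x‖ ≥ N. Then there exist ε > 0 and s₀ ≥ 1 such that for every x with ‖x‖ ≥ N, every real s ≥ s₀, and every y with ‖x−y‖ ≤ ε·‖x‖·s^{1/α}, one has V(y) ≤ s·V(x)/2. -/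
open MeasureTheory

/-- For a potential of global power growth (`V(y) ≤ M‖y‖^α` for `‖y‖ ≥ N`,
`V(y) ≤ C` for `‖y‖ < N`, `V(x) ≥ m‖x‖^α` for `‖x‖ ≥ N`): there exist `ε > 0` and
`s₀ ≥ 1` such that for every `x` with `‖x‖ ≥ N`, every `s ≥ s₀` and every `y` with
`‖x−y‖ ≤ ε‖x‖ s^{1/α}`, one has `V(y) ≤ sV(x)/2`. -/
theorem sigma_lower_bound_power_potential (d : ℕ) (hd : 1 ≤ d) (α N C m M : ℝ)
    (hα : 0 < α) (hN : 0 < N) (hC : 0 ≤ C) (hm : 0 < m) (hmM : m ≤ M)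
    (V : EuclideanSpace ℝ (Fin d) → ℝ)
    (hV_upper : ∀ y : EuclideanSpace ℝ (Fin d), N ≤ ‖y‖ → V y ≤ M * ‖y‖ ^ α)
    (hV_bdd : ∀ y : EuclideanSpace ℝ (Fin d), ‖y‖ < N → V y ≤ C)
    (hV_lower : ∀ x : EuclideanSpace ℝ (Fin d), N ≤ ‖x‖ → m * ‖x‖ ^ α ≤ V x) :
    ∃ ε > (0 : ℝ), ∃ s₀ ≥ (1 : ℝ),
      ∀ x : EuclideanSpace ℝ (Fin d), N ≤ ‖x‖ →
        ∀ s : ℝ, s₀ ≤ s →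
          ∀ y : EuclideanSpace ℝ (Fin d), ‖x - y‖ ≤ ε * ‖x‖ * s ^ (1 / α) →
            V y ≤ s * V x / 2 := by
  have hM : 0 < M := lt_of_lt_of_le hm hmM
  set ε : ℝ := (m / (4 * M)) ^ (1 / α) / 2 with hε_def
  have hbase : (0:ℝ) < m / (4 * M) := div_pos hm (by linarith)
  have hεpos : 0 < ε := by
    apply div_pos _ (by norm_num)
    exact Real.rpow_pos_of_pos hbase _
  have h2ε : (2 * ε) ^ α = m / (4 * M) := by
    have : 2 * ε = (m / (4 * M)) ^ (1 / α) := by rw [hε_def]; ring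
    rw [this, ← Real.rpow_mul hbase.le, one_div, inv_mul_cancel₀ hα.ne', Real.rpow_one]
  have hNα : 0 < m * N ^ α := mul_pos hm (Real.rpow_pos_of_pos hN _)
  refine ⟨ε, hεpos, max (max 1 (ε⁻¹ ^ α)) (2 * C / (m * N ^ α)), le_trans (le_max_left _ _) (le_max_left _ _), ?_⟩
  intro x hx s hs y hy
  have hs1 : (1:ℝ) ≤ s := le_trans (le_trans (le_max_left _ _) (le_max_left _ _)) hs
  have hspos : (0:ℝ) < s := by linarith
  have hsinv : ε⁻¹ ≤ s ^ (1 / α) := by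
    have h1 : ε⁻¹ ^ α ≤ s := le_trans (le_trans (le_max_right _ _) (le_max_left _ _)) hs
    calc ε⁻¹ = (ε⁻¹ ^ α) ^ (1 / α) := by
          rw [← Real.rpow_mul (inv_nonneg.mpr hεpos.le), mul_one_div, div_self hα.ne', Real.rpow_one]
      _ ≤ s ^ (1 / α) := Real.rpow_le_rpow (Real.rpow_nonneg (inv_nonneg.mpr hεpos.le) _) h1 (by positivity)
  have hεs : 1 ≤ ε * s ^ (1 / α) := by
    have := mul_le_mul_of_nonneg_left hsinv hεpos.le
    rwa [mul_inv_cancel₀ hεpos.ne'] at this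
  have hxpos : 0 < ‖x‖ := lt_of_lt_of_le hN hx
  have hspow : (0:ℝ) ≤ s ^ (1/α) := Real.rpow_nonneg hspos.le _
  have hyle : ‖y‖ ≤ 2 * ε * ‖x‖ * s ^ (1 / α) := by
    have h1 : ‖y‖ ≤ ‖x‖ + ‖x - y‖ := by
      have := norm_sub_norm_le x y
      have := norm_add_le (x - y) y
      calc ‖y‖ = ‖x - (x - y)‖ := by rw [sub_sub_cancel]
        _ ≤ ‖x‖ + ‖x - y‖ := norm_sub_le _ _
    have h2 : ‖x‖ ≤ ε * ‖x‖ * s ^ (1 / α) := by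
      nlinarith [mul_le_mul_of_nonneg_left hεs hxpos.le]
    nlinarith
  have hVx : m * ‖x‖ ^ α ≤ V x := hV_lower x hx
  have hxα : 0 < ‖x‖ ^ α := Real.rpow_pos_of_pos hxpos _
  have hVxpos : 0 < V x := lt_of_lt_of_le (mul_pos hm hxα) hVx
  by_cases hyN : ‖y‖ < N
  · have hVy : V y ≤ C := hV_bdd y hyN
    have hsC : 2 * C / (m * N ^ α) ≤ s := le_trans (le_max_right _ _) hs
    have hNx : m * N ^ α ≤ V x := by
      refine le_trans ?_ hVx
      exact mul_le_mul_of_nonneg_left (Real.rpow_le_rpow hN.le hx hα.le) hm.le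
    have : 2 * C ≤ s * (m * N ^ α) := by
      rw [div_le_iff₀ hNα] at hsC; linarith
    nlinarith [mul_le_mul_of_nonneg_left hNx hspos.le]
  · push_neg at hyN
    have hVy : V y ≤ M * ‖y‖ ^ α := hV_upper y hyN
    have hyb : ‖y‖ ^ α ≤ (2 * ε) ^ α * ‖x‖ ^ α * s := by
      have h1 : ‖y‖ ^ α ≤ (2 * ε * ‖x‖ * s ^ (1/α)) ^ α :=
        Real.rpow_le_rpow (norm_nonneg _) hyle hα.le
      have h2 : (2 * ε * ‖x‖ * s ^ (1/α)) ^ α = (2*ε) ^ α * ‖x‖ ^ α * (s ^ (1/α)) ^ α := by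
        rw [Real.mul_rpow (by positivity) hspow, Real.mul_rpow (by positivity) hxpos.le]
      have h3 : (s ^ (1/α)) ^ α = s := by
        rw [← Real.rpow_mul hspos.le, one_div, inv_mul_cancel₀ hα.ne', Real.rpow_one]
      rw [h2, h3] at h1
      exact h1
    calc V y ≤ M * ‖y‖ ^ α := hVy
      _ ≤ M * ((2 * ε) ^ α * ‖x‖ ^ α * s) := by
          exact mul_le_mul_of_nonneg_left hyb hM.le
      _ = s * (m * ‖x‖ ^ α) / 4 := by rw [h2ε]; field_simp
      _ ≤ s * V x / 2 := by nlinarith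
end
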